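/- Let n ≡ 1 (mod 3), n ≥ 6, and let T be a tree on n vertices not isomorphic to K_{1,n-1} that has a vertex of degree divisible by 3. Then every restrictive edge-colouring of K_n by Z_3 (every vertex has at least n-2 incident edges of the same colour) admits a zero-sum embedding of T. -/

import Mathlib

open SimpleGraph Finset

section helpers
variable {V : Type} [Fintype V] [DecidableEq V] (T : SimpleGraph V) [DecidableRel T.Adj]



set_option linter.unusedSectionVars false in
lemma noTri (hacyc : T.IsAcyclic) {a b z : V} (hab : T.Adj a b) (hbz : T.Adj b z)
    (haz : T.Adj a z) : False := by
  have hp2 : (SimpleGraph.Walk.cons hab (SimpleGraph.Walk.cons hbz SimpleGraph.Walk.nil)).IsPath := by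
    simp [SimpleGraph.Walk.isPath_def, hab.ne, hbz.ne, haz.ne]
  have hu := isAcyclic_iff_path_unique.mp hacyc (SimpleGraph.Path.singleton haz) ⟨_, hp2⟩
  have h2 : (SimpleGraph.Path.singleton haz).1.length = 2 := by
    rw [hu]; simp
  simp [SimpleGraph.Path.singleton] at h2

set_option linter.unusedSectionVars false in
lemma noC4 (hacyc : T.IsAcyclic) {a b z1 z2 : V} (hne : a ≠ b) (hz : z1 ≠ z2)
    (h1 : T.Adj a z1) (h2 : T.Adj z1 b) (h3 : T.Adj a z2) (h4 : T.Adj z2 b) : False := by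
  have hp1 : (SimpleGraph.Walk.cons h1 (SimpleGraph.Walk.cons h2 SimpleGraph.Walk.nil)).IsPath := by
    simp [SimpleGraph.Walk.isPath_def, h1.ne, h2.ne, hne]
  have hp2 : (SimpleGraph.Walk.cons h3 (SimpleGraph.Walk.cons h4 SimpleGraph.Walk.nil)).IsPath := by
    simp [SimpleGraph.Walk.isPath_def, h3.ne, h4.ne, hne]
  have heq := isAcyclic_iff_path_unique.mp hacyc ⟨_, hp1⟩ ⟨_, hp2⟩
  have := congrArg (fun p => SimpleGraph.Walk.support p.1) heq
  simp at this
  exact hz this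

lemma nbr_inter_card (hacyc : T.IsAcyclic) {u w : V} (hne : u ≠ w) :
    (T.neighborFinset u ∩ T.neighborFinset w).card ≤ 1 := by
  by_contra h
  push_neg at h
  obtain ⟨z1, hz1, z2, hz2, hzz⟩ := Finset.one_lt_card.mp h
  simp only [Finset.mem_inter, mem_neighborFinset] at hz1 hz2
  exact noC4 T hacyc hne hzz hz1.1 hz1.2.symm hz2.1 hz2.2.symm

lemma nbr_disj (hacyc : T.IsAcyclic) {u w : V} (h : T.Adj u w) :
    T.neighborFinset u ∩ T.neighborFinset w = ∅ := by
  rw [Finset.eq_empty_iff_forall_notMem]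
  intro z hz
  simp only [Finset.mem_inter, mem_neighborFinset] at hz
  exact noTri T hacyc h hz.2 hz.1


noncomputable def starIso (hacyc : T.IsAcyclic) (hV : Fintype.card V = n) (hn : 2 ≤ n)
    {v : V} (hv : ∀ w, w ≠ v → T.Adj v w) :
    T ≃g completeBipartiteGraph (Fin 1) (Fin (n - 1)) := by
  have e1 : {w : V // w = v} ≃ Fin 1 := by
    apply Fintype.equivFinOfCardEq
    simp [Fintype.card_subtype_eq]
  have e2 : {w : V // ¬ (w = v)} ≃ Fin (n - 1) := by
    apply Fintype.equivFinOfCardEq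
    rw [Fintype.card_subtype_compl]
    simp [Fintype.card_subtype_eq, hV]
  let E : V ≃ (Fin 1 ⊕ Fin (n - 1)) :=
    (Equiv.sumCompl (· = v)).symm.trans (Equiv.sumCongr e1 e2)
  refine ⟨E, ?_⟩
  intro a b
  have hleft : ∀ x : V, (E x).isLeft = true ↔ x = v := by
    intro x
    by_cases hx : x = v
    · simp [E, Equiv.sumCompl_symm_apply_of_pos hx, hx]
    · simp [E, Equiv.sumCompl_symm_apply_of_neg hx, hx]
  have hright : ∀ x : V, (E x).isRight = true ↔ x ≠ v := by
    intro x
    have := hleft x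
    cases hE : E x <;> simp_all
  simp only [completeBipartiteGraph_adj]
  constructor
  · rintro (⟨h1, h2⟩ | ⟨h1, h2⟩)
    · rw [hleft] at h1; rw [hright] at h2
      subst h1; exact hv b h2
    · rw [hright] at h1; rw [hleft] at h2
      subst h2; exact (hv a h1).symm
  · intro hab
    by_cases ha : a = v
    · left
      refine ⟨(hleft a).mpr ha, (hright b).mpr ?_⟩
      intro hb
      rw [ha, hb] at hab
      exact T.loopless.irrefl v hab
    · right
      refine ⟨(hright a).mpr ha, (hleft b).mpr ?_⟩
      by_contra hb
      exact noTri T hacyc hab ((hv b hb).symm) (hv a ha).symm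

lemma step_lemma (hacyc : T.IsAcyclic) (S : Finset V) (hm : 4 ≤ S.card)
    (hΔ : ∀ w ∈ S, ((T.neighborFinset w) ∩ S).card ≤ S.card - 2) :
    ∃ u ∈ S, ∃ v ∈ S, u ≠ v ∧ ¬T.Adj u v ∧
      ∀ w ∈ S, w ≠ u → w ≠ v →
        ((T.neighborFinset w) ∩ ((S.erase u).erase v)).card ≤ S.card - 4 := by
  classical
  set m := S.card with hmdef
  have hSne : S.Nonempty := Finset.card_pos.mp (by omega)
  obtain ⟨u, huS, humax⟩ := S.exists_max_image (fun w => ((T.neighborFinset w) ∩ S).card) hSne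
  set X := S.filter (fun y => y ≠ u ∧ ¬T.Adj u y) with hX
  have hXne : X.Nonempty := by
    by_contra hXe
    rw [Finset.not_nonempty_iff_eq_empty] at hXe
    have hsub : S ⊆ insert u (T.neighborFinset u ∩ S) := by
      intro y hy
      rcases eq_or_ne y u with rfl | hyu
      · exact Finset.mem_insert_self _ _
      · by_cases hadj : T.Adj u y
        · exact Finset.mem_insert_of_mem (Finset.mem_inter.mpr ⟨(T.mem_neighborFinset u y).mpr hadj, hy⟩)
        · exfalso
          have : y ∈ X := Finset.mem_filter.mpr ⟨hy, hyu, hadj⟩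
          simp [hXe] at this
    have h1 := Finset.card_le_card hsub
    have h2 := Finset.card_insert_le u (T.neighborFinset u ∩ S)
    have h3 := hΔ u huS
    omega
  obtain ⟨v, hvX, hvmax⟩ := X.exists_max_image (fun w => ((T.neighborFinset w) ∩ S).card) hXne
  rw [hX, Finset.mem_filter] at hvX
  obtain ⟨hvS, hvu, hnadj⟩ := hvX
  have hvmax' : ∀ w ∈ S, w ≠ u → ¬T.Adj u w →
      ((T.neighborFinset w) ∩ S).card ≤ ((T.neighborFinset v) ∩ S).card := by
    intro w hw h1 h2
    exact hvmax w (Finset.mem_filter.mpr ⟨hw, h1, h2⟩)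
  refine ⟨u, huS, v, hvS, hvu.symm, hnadj, ?_⟩
  intro w hwS hwu hwv
  by_contra hcon
  push_neg at hcon
  -- abbreviations
  set A := T.neighborFinset u ∩ S with hA
  set B := T.neighborFinset v ∩ S with hB
  set Cw := T.neighborFinset w ∩ S with hC
  have hrw : T.neighborFinset w ∩ ((S.erase u).erase v) = (Cw.erase u).erase v := by
    ext z
    simp only [hC, Finset.mem_inter, Finset.mem_erase]
    tauto
  rw [hrw] at hcon
  have hcon' : m - 3 ≤ ((Cw.erase u).erase v).card := by omega
  have hCS : Cw.card ≤ m - 2 := hΔ w hwS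
  have hAS : A.card ≤ m - 2 := hΔ u huS
  have hwA : ((T.neighborFinset w) ∩ S).card ≤ A.card := humax w hwS
  have herase2 : Cw.card ≤ ((Cw.erase u).erase v).card + 2 := by
    have h1 := Finset.pred_card_le_card_erase (s := Cw) (a := u)
    have h2 := Finset.pred_card_le_card_erase (s := Cw.erase u) (a := v)
    omega
  have hCw3 : m - 3 ≤ Cw.card := by
    have := Finset.card_erase_le (s := Cw) (a := u)
    have := Finset.card_erase_le (s := Cw.erase u) (a := v)
    omega
  by_cases hadjuw : T.Adj u w
  · -- case A
    by_cases hadjvw : T.Adj v w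
    · -- both adjacent : u, v ∈ Cw, erased twice
      have huC : u ∈ Cw := Finset.mem_inter.mpr ⟨(T.mem_neighborFinset w u).mpr hadjuw.symm, huS⟩
      have hvC : v ∈ Cw.erase u := Finset.mem_erase.mpr ⟨hvu, Finset.mem_inter.mpr ⟨(T.mem_neighborFinset w v).mpr hadjvw.symm, hvS⟩⟩
      have e1 : (Cw.erase u).card = Cw.card - 1 := Finset.card_erase_of_mem huC
      have e2 : ((Cw.erase u).erase v).card = (Cw.erase u).card - 1 := Finset.card_erase_of_mem hvC
      have h1 : 1 ≤ Cw.card := Finset.card_pos.mpr ⟨u, huC⟩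
      omega
    · -- w adj u, not v
      have huC : u ∈ Cw := Finset.mem_inter.mpr ⟨(T.mem_neighborFinset w u).mpr hadjuw.symm, huS⟩
      have e1 : (Cw.erase u).card = Cw.card - 1 := Finset.card_erase_of_mem huC
      have e2 : ((Cw.erase u).erase v).card ≤ (Cw.erase u).card := Finset.card_erase_le
      have hCwge : m - 2 ≤ Cw.card := by omega
      -- disjoint sets D1 = A.erase w, D2 = Cw.erase u inside S minus {u,v,w}
      have hdisj : Disjoint (A.erase w) (Cw.erase u) := by
        rw [Finset.disjoint_left]
        intro z hz1 hz2
        rw [Finset.mem_erase] at hz1 hz2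
        have hz1' := Finset.mem_inter.mp hz1.2
        have hz2' := Finset.mem_inter.mp hz2.2
        rw [T.mem_neighborFinset] at hz1' hz2'
        exact noTri T hacyc hadjuw hz2'.1 hz1'.1
      have hsub : (A.erase w) ∪ (Cw.erase u) ⊆ ((S.erase u).erase v).erase w := by
        intro z hz
        rcases Finset.mem_union.mp hz with hz | hz
        · rw [Finset.mem_erase] at hz
          have hz' := Finset.mem_inter.mp hz.2
          rw [T.mem_neighborFinset] at hz'
          refine Finset.mem_erase.mpr ⟨hz.1, Finset.mem_erase.mpr ⟨?_, Finset.mem_erase.mpr ⟨?_, hz'.2⟩⟩⟩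
          · intro hzv; rw [hzv] at hz'; exact hnadj hz'.1
          · intro hzu; rw [hzu] at hz'; exact T.loopless.irrefl u hz'.1
        · rw [Finset.mem_erase] at hz
          have hz' := Finset.mem_inter.mp hz.2
          rw [T.mem_neighborFinset] at hz'
          refine Finset.mem_erase.mpr ⟨?_, Finset.mem_erase.mpr ⟨?_, Finset.mem_erase.mpr ⟨hz.1, hz'.2⟩⟩⟩
          · intro hzw; rw [hzw] at hz'; exact T.loopless.irrefl w hz'.1
          · intro hzv; rw [hzv] at hz'; exact hadjvw hz'.1.symm
      have hcard1 := Finset.card_le_card hsub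
      rw [Finset.card_union_of_disjoint hdisj] at hcard1
      have hwA' : w ∈ A := Finset.mem_inter.mpr ⟨(T.mem_neighborFinset u w).mpr hadjuw, hwS⟩
      have eA : (A.erase w).card = A.card - 1 := Finset.card_erase_of_mem hwA'
      have hS3 : (((S.erase u).erase v).erase w).card = m - 3 := by
        rw [Finset.card_erase_of_mem (Finset.mem_erase.mpr ⟨hwv, Finset.mem_erase.mpr ⟨hwu, hwS⟩⟩),
          Finset.card_erase_of_mem (Finset.mem_erase.mpr ⟨hvu, hvS⟩), Finset.card_erase_of_mem huS]
        omega
      have hAge : m - 2 ≤ A.card := le_trans (le_trans hCwge hwA) (le_refl _)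
      have h1 : 1 ≤ A.card := by omega
      have h2 : 1 ≤ Cw.card := by omega
      omega
  · -- w not adjacent to u : w ∈ X
    have hwdv : Cw.card ≤ B.card := hvmax' w hwS hwu hadjuw
    have hdvdu : B.card ≤ A.card := humax v hvS
    have huC : u ∉ Cw := by
      intro hmem
      have := (T.mem_neighborFinset w u).mp (Finset.mem_inter.mp hmem).1
      exact hadjuw this.symm
    have e1 : Cw.erase u = Cw := Finset.erase_eq_of_notMem huC
    by_cases hadjvw : T.Adj v w
    · -- case B
      have hvC : v ∈ Cw := Finset.mem_inter.mpr ⟨(T.mem_neighborFinset w v).mpr hadjvw.symm, hvS⟩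
      have e2 : ((Cw.erase u).erase v).card = Cw.card - 1 := by
        rw [e1, Finset.card_erase_of_mem hvC]
      have hCwge : m - 2 ≤ Cw.card := by omega
      -- A and Cw almost disjoint inside S minus {u, w}
      have hinter : (A ∩ Cw).card ≤ 1 := by
        have hsub2 : A ∩ Cw ⊆ T.neighborFinset u ∩ T.neighborFinset w := by
          intro z hz
          simp only [hA, hC, Finset.mem_inter] at hz ⊢
          exact ⟨hz.1.1, hz.2.1⟩
        exact le_trans (Finset.card_le_card hsub2) (nbr_inter_card T hacyc hwu.symm)
      have hsub : A ∪ Cw ⊆ (S.erase u).erase w := by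
        intro z hz
        rcases Finset.mem_union.mp hz with hz | hz
        · have hz' := Finset.mem_inter.mp hz
          rw [T.mem_neighborFinset] at hz'
          refine Finset.mem_erase.mpr ⟨?_, Finset.mem_erase.mpr ⟨?_, hz'.2⟩⟩
          · intro hh; rw [hh] at hz'; exact hadjuw hz'.1
          · intro hh; rw [hh] at hz'; exact T.loopless.irrefl u hz'.1
        · have hz' := Finset.mem_inter.mp hz
          rw [T.mem_neighborFinset] at hz'
          refine Finset.mem_erase.mpr ⟨?_, Finset.mem_erase.mpr ⟨?_, hz'.2⟩⟩
          · intro hh; rw [hh] at hz'; exact T.loopless.irrefl w hz'.1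
          · intro hh; rw [hh] at hz'; exact hadjuw hz'.1.symm
      have hcard1 := Finset.card_le_card hsub
      have hcard2 := Finset.card_union_add_card_inter A Cw
      have hS2 : ((S.erase u).erase w).card = m - 2 := by
        rw [Finset.card_erase_of_mem (Finset.mem_erase.mpr ⟨hwu, hwS⟩), Finset.card_erase_of_mem huS]
        omega
      omega
    · -- case C : w not adjacent to u nor v
      have hvC : v ∉ Cw := by
        intro hmem
        exact hadjvw ((T.mem_neighborFinset w v).mp (Finset.mem_inter.mp hmem).1).symm
      have e2 : (Cw.erase u).erase v = Cw := by rw [e1, Finset.erase_eq_of_notMem hvC]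
      rw [e2] at hcon hcon'
      -- A, B, Cw ⊆ S minus {u,v,w}
      have hsub : ∀ (P : Finset V) (p : V), P = T.neighborFinset p ∩ S → ¬T.Adj p u → ¬T.Adj p v → ¬T.Adj p w →
          P ⊆ ((S.erase u).erase v).erase w := by
        intro P p hP h1 h2 h3
        intro z hz
        rw [hP] at hz
        have hz' := Finset.mem_inter.mp hz
        rw [T.mem_neighborFinset] at hz'
        refine Finset.mem_erase.mpr ⟨?_, Finset.mem_erase.mpr ⟨?_, Finset.mem_erase.mpr ⟨?_, hz'.2⟩⟩⟩
        · rintro rfl; exact h3 hz'.1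
        · rintro rfl; exact h2 hz'.1
        · rintro rfl; exact h1 hz'.1
      have hsubA : A ⊆ ((S.erase u).erase v).erase w :=
        hsub A u rfl (T.loopless.irrefl u) hnadj hadjuw
      have hsubB : B ⊆ ((S.erase u).erase v).erase w :=
        hsub B v rfl (fun h => hnadj h.symm) (T.loopless.irrefl v) hadjvw
      have hsubC : Cw ⊆ ((S.erase u).erase v).erase w :=
        hsub Cw w rfl (fun h => hadjuw h.symm) (fun h => hadjvw h.symm) (T.loopless.irrefl w)
      have hS3 : (((S.erase u).erase v).erase w).card = m - 3 := by
        rw [Finset.card_erase_of_mem (Finset.mem_erase.mpr ⟨hwv, Finset.mem_erase.mpr ⟨hwu, hwS⟩⟩),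
          Finset.card_erase_of_mem (Finset.mem_erase.mpr ⟨hvu, hvS⟩), Finset.card_erase_of_mem huS]
        omega
      -- intersections small
      have hiAB : (A ∩ B).card ≤ 1 := by
        refine le_trans (Finset.card_le_card ?_) (nbr_inter_card T hacyc (Ne.symm hvu))
        intro z hz; simp only [hA, hB, Finset.mem_inter] at hz ⊢; exact ⟨hz.1.1, hz.2.1⟩
      have hiAC : (A ∩ Cw).card ≤ 1 := by
        refine le_trans (Finset.card_le_card ?_) (nbr_inter_card T hacyc hwu.symm)
        intro z hz; simp only [hA, hC, Finset.mem_inter] at hz ⊢; exact ⟨hz.1.1, hz.2.1⟩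
      have hiBC : (B ∩ Cw).card ≤ 1 := by
        refine le_trans (Finset.card_le_card ?_) (nbr_inter_card T hacyc hwv.symm)
        intro z hz; simp only [hB, hC, Finset.mem_inter] at hz ⊢; exact ⟨hz.1.1, hz.2.1⟩
      have hu1 := Finset.card_union_add_card_inter A B
      have hu2 := Finset.card_union_add_card_inter (A ∪ B) Cw
      have hu3 : (A ∪ B) ∩ Cw = (A ∩ Cw) ∪ (B ∩ Cw) := Finset.union_inter_distrib_right A B Cw
      have hu3' : ((A ∪ B) ∩ Cw).card = ((A ∩ Cw) ∪ (B ∩ Cw)).card := by rw [hu3]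
      have hu4 : ((A ∩ Cw) ∪ (B ∩ Cw)).card ≤ (A ∩ Cw).card + (B ∩ Cw).card := Finset.card_union_le _ _
      have husub : A ∪ B ∪ Cw ⊆ ((S.erase u).erase v).erase w := by
        intro z hz
        rcases Finset.mem_union.mp hz with hz | hz
        · rcases Finset.mem_union.mp hz with hz | hz
          · exact hsubA hz
          · exact hsubB hz
        · exact hsubC hz
      have hucard := Finset.card_le_card husub
      have haCw : (T.neighborFinset w ∩ S).card = Cw.card := by rw [hC]
      rw [haCw] at hwA
      -- deduce m = 4 case or contradiction
      have hm4 : m = 4 := by omega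
      -- singleton case
      have hS3card : (((S.erase u).erase v).erase w).card = 1 := by omega
      have hAcard : 1 ≤ A.card := by omega
      have hAeq : A = ((S.erase u).erase v).erase w :=
        Finset.eq_of_subset_of_card_le hsubA (by omega)
      have hBeq : B = ((S.erase u).erase v).erase w :=
        Finset.eq_of_subset_of_card_le hsubB (by omega)
      have hCeq : Cw = ((S.erase u).erase v).erase w :=
        Finset.eq_of_subset_of_card_le hsubC (by omega)
      obtain ⟨t, ht⟩ := Finset.card_eq_one.mp hS3card
      have htA : t ∈ A := by rw [hAeq, ht]; exact Finset.mem_singleton_self t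
      have htB : t ∈ B := by rw [hBeq, ht]; exact Finset.mem_singleton_self t
      have htC : t ∈ Cw := by rw [hCeq, ht]; exact Finset.mem_singleton_self t
      have htS : t ∈ S := (Finset.mem_inter.mp htA).2
      have hadjut : T.Adj u t := (T.mem_neighborFinset u t).mp (Finset.mem_inter.mp htA).1
      have hadjvt : T.Adj v t := (T.mem_neighborFinset v t).mp (Finset.mem_inter.mp htB).1
      have hadjwt : T.Adj w t := (T.mem_neighborFinset w t).mp (Finset.mem_inter.mp htC).1
      have hsubt : {u, v, w} ⊆ T.neighborFinset t ∩ S := by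
        intro z hz
        simp only [Finset.mem_insert, Finset.mem_singleton] at hz
        rcases hz with rfl | rfl | rfl
        · exact Finset.mem_inter.mpr ⟨(T.mem_neighborFinset t z).mpr hadjut.symm, huS⟩
        · exact Finset.mem_inter.mpr ⟨(T.mem_neighborFinset t z).mpr hadjvt.symm, hvS⟩
        · exact Finset.mem_inter.mpr ⟨(T.mem_neighborFinset t z).mpr hadjwt.symm, hwS⟩
      have hc3 : ({u, v, w} : Finset V).card = 3 := by
        rw [Finset.card_insert_of_notMem, Finset.card_insert_of_notMem, Finset.card_singleton]
        · simp [hwv.symm]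
        · simp only [Finset.mem_insert, Finset.mem_singleton]
          push_neg
          exact ⟨hvu.symm, hwu.symm⟩
      have := Finset.card_le_card hsubt
      have := hΔ t htS
      omega


lemma any_inj {n : ℕ} (hn : 0 < n) (S : Finset V) (P : Finset (Fin n)) (hcards : S.card = P.card) :
    ∃ g : V → Fin n, Set.InjOn g ↑S ∧ ∀ x ∈ S, g x ∈ P := by
  classical
  have e := Finset.equivOfCardEq hcards
  refine ⟨fun x => if h : x ∈ S then (e ⟨x, h⟩ : {y // y ∈ P}).1 else ⟨0, hn⟩, ?_, ?_⟩
  · intro x hx y hy hxy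
    simp only [Finset.mem_coe] at hx hy
    simp only [dif_pos hx, dif_pos hy] at hxy
    have h2 : e ⟨x, hx⟩ = e ⟨y, hy⟩ := Subtype.ext hxy
    have h3 := e.injective h2
    exact congrArg Subtype.val h3
  · intro x hx
    simp only [dif_pos hx]
    exact (e ⟨x, hx⟩).2

lemma embed_avoid (hacyc : T.IsAcyclic) {n : ℕ} (hn : 0 < n)
    (c : Sym2 (Fin n) → ZMod 3) (a₀ : ZMod 3)
    (hmatch : ∀ p q r : Fin n, q ≠ p → r ≠ p → c s(p,q) ≠ a₀ → c s(p,r) ≠ a₀ → q = r) :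
    ∀ k (S : Finset V) (P : Finset (Fin n)), S.card = k → P.card = k →
      (∀ w ∈ S, (T.neighborFinset w ∩ S).card ≤ k - 2) →
      ∃ g : V → Fin n, Set.InjOn g ↑S ∧ (∀ x ∈ S, g x ∈ P) ∧
        ∀ u ∈ S, ∀ v ∈ S, T.Adj u v → c s(g u, g v) = a₀ := by
  classical
  intro k
  induction k using Nat.strong_induction_on with
  | _ k IH =>
  intro S P hS hP hΔ
  by_cases hedge : ∃ u ∈ S, ∃ v ∈ S, T.Adj u v
  swap
  · obtain ⟨g, hinj, hmaps⟩ := any_inj hn S P (by omega)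
    refine ⟨g, hinj, hmaps, ?_⟩
    intro u hu v hv hadj
    exact absurd ⟨u, hu, v, hv, hadj⟩ hedge
  by_cases hbad : ∃ p ∈ P, ∃ q ∈ P, c s(p,q) ≠ a₀ ∧ q ≠ p
  swap
  · obtain ⟨g, hinj, hmaps⟩ := any_inj hn S P (by omega)
    refine ⟨g, hinj, hmaps, ?_⟩
    intro u hu v hv hadj
    by_contra hne
    push_neg at hbad
    have heq := hbad (g u) (hmaps u hu) (g v) (hmaps v hv) hne
    exact hadj.ne (hinj hu hv heq.symm)
  obtain ⟨p, hpP, q, hqP, hcpq, hqp⟩ := hbad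
  by_cases hk3 : k ≤ 3
  · -- k must be 3 with a single edge
    obtain ⟨u, huS, v, hvS, hadj⟩ := hedge
    have huv : u ≠ v := hadj.ne
    have hk2 : 2 ≤ k := by
      rw [← hS]
      exact Finset.one_lt_card.mpr ⟨u, huS, v, hvS, huv⟩
    have hvNu : v ∈ T.neighborFinset u ∩ S :=
      Finset.mem_inter.mpr ⟨(T.mem_neighborFinset u v).mpr hadj, hvS⟩
    have hk3' : k = 3 := by
      rcases Nat.lt_or_ge k 3 with h | h
      · exfalso
        have := hΔ u huS
        have : (T.neighborFinset u ∩ S).card = 0 := by omega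
        rw [Finset.card_eq_zero] at this
        simp [this] at hvNu
      · omega
    -- third vertex z and third target r
    have hz : ((S.erase u).erase v).card = 1 := by
      rw [Finset.card_erase_of_mem (Finset.mem_erase.mpr ⟨huv.symm, hvS⟩),
        Finset.card_erase_of_mem huS]
      omega
    obtain ⟨z, hzeq⟩ := Finset.card_eq_one.mp hz
    have hzS : z ∈ (S.erase u).erase v := by rw [hzeq]; exact Finset.mem_singleton_self z
    rw [Finset.mem_erase, Finset.mem_erase] at hzS
    obtain ⟨hzv, hzu, hzSS⟩ := hzS
    have hr : ((P.erase p).erase q).card = 1 := by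
      rw [Finset.card_erase_of_mem (Finset.mem_erase.mpr ⟨hqp, hqP⟩),
        Finset.card_erase_of_mem hpP]
      omega
    obtain ⟨r, hreq⟩ := Finset.card_eq_one.mp hr
    have hrP : r ∈ (P.erase p).erase q := by rw [hreq]; exact Finset.mem_singleton_self r
    rw [Finset.mem_erase, Finset.mem_erase] at hrP
    obtain ⟨hrq, hrp, hrPP⟩ := hrP
    -- S = {u, v, z}
    have hc3 : ({u, v, z} : Finset V).card = 3 := by
      rw [Finset.card_insert_of_notMem (by simp [huv, hzu.symm] : u ∉ ({v, z} : Finset V)),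
        Finset.card_insert_of_notMem (by simp [hzv.symm] : v ∉ ({z} : Finset V)),
        Finset.card_singleton]
    have hsub3 : ({u, v, z} : Finset V) ⊆ S := by
      intro x hx
      simp only [Finset.mem_insert, Finset.mem_singleton] at hx
      rcases hx with rfl | rfl | rfl
      exacts [huS, hvS, hzSS]
    have hSeq : S = {u, v, z} :=
      (Finset.eq_of_subset_of_card_le hsub3 (by omega)).symm
    -- no edges besides u-v
    have hnoadj : ∀ x ∈ S, ∀ y ∈ S, T.Adj x y → (x = u ∧ y = v) ∨ (x = v ∧ y = u) := by
      intro x hx y hy hxy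
      have hNu := hΔ u huS
      have hNv := hΔ v hvS
      have hzu' : ¬T.Adj u z := by
        intro h
        have h1 : z ∈ T.neighborFinset u ∩ S :=
          Finset.mem_inter.mpr ⟨(T.mem_neighborFinset u z).mpr h, hzSS⟩
        have : 1 < (T.neighborFinset u ∩ S).card :=
          Finset.one_lt_card.mpr ⟨v, hvNu, z, h1, hzv.symm⟩
        omega
      have hzv' : ¬T.Adj v z := by
        intro h
        have h0 : u ∈ T.neighborFinset v ∩ S :=
          Finset.mem_inter.mpr ⟨(T.mem_neighborFinset v u).mpr hadj.symm, huS⟩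
        have h1 : z ∈ T.neighborFinset v ∩ S :=
          Finset.mem_inter.mpr ⟨(T.mem_neighborFinset v z).mpr h, hzSS⟩
        have : 1 < (T.neighborFinset v ∩ S).card :=
          Finset.one_lt_card.mpr ⟨u, h0, z, h1, hzu.symm⟩
        omega
      rw [hSeq] at hx hy
      simp only [Finset.mem_insert, Finset.mem_singleton] at hx hy
      rcases hx with rfl | rfl | rfl <;> rcases hy with rfl | rfl | rfl
      · exact absurd hxy (T.loopless.irrefl _)
      · exact Or.inl ⟨rfl, rfl⟩
      · exact absurd hxy hzu'
      · exact Or.inr ⟨rfl, rfl⟩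
      · exact absurd hxy (T.loopless.irrefl _)
      · exact absurd hxy hzv'
      · exact absurd hxy (fun h => hzu' h.symm)
      · exact absurd hxy (fun h => hzv' h.symm)
      · exact absurd hxy (T.loopless.irrefl _)
    refine ⟨fun x => if x = u then p else if x = v then r else q, ?_, ?_, ?_⟩
    · have hmem3 : ∀ x ∈ S, x = u ∨ x = v ∨ x = z := by
        intro x hx; rw [hSeq] at hx; simpa using hx
      intro x hx y hy hxy
      simp only [Finset.mem_coe] at hx hy
      dsimp only at hxy
      rcases hmem3 x hx with rfl | rfl | rfl <;> rcases hmem3 y hy with rfl | rfl | rfl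
      · rfl
      · rw [if_pos rfl, if_neg huv.symm, if_pos rfl] at hxy
        exact absurd hxy.symm hrp
      · rw [if_pos rfl, if_neg hzu, if_neg hzv] at hxy
        exact absurd hxy.symm hqp
      · rw [if_neg huv.symm, if_pos rfl, if_pos rfl] at hxy
        exact absurd hxy hrp
      · rfl
      · rw [if_neg huv.symm, if_pos rfl, if_neg hzu, if_neg hzv] at hxy
        exact absurd hxy hrq
      · rw [if_neg hzu, if_neg hzv, if_pos rfl] at hxy
        exact absurd hxy hqp
      · rw [if_neg hzu, if_neg hzv, if_neg huv.symm, if_pos rfl] at hxy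
        exact absurd hxy.symm hrq
      · rfl
    · intro x hx
      by_cases h1 : x = u
      · simp [h1, hpP]
      by_cases h2 : x = v
      · simp [h1, h2, huv.symm, hrPP]
      · simp [h1, h2, hqP]
    · intro x hx y hy hxy
      rcases hnoadj x hx y hy hxy with ⟨rfl, rfl⟩ | ⟨rfl, rfl⟩
      · dsimp only
        rw [if_neg huv.symm, if_pos rfl, if_pos rfl]
        by_contra hne
        exact hrq (hmatch p q r hqp hrp hcpq hne).symm
      · dsimp only
        rw [if_neg huv.symm, if_pos rfl, if_pos rfl]
        rw [Sym2.eq_swap]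
        by_contra hne
        exact hrq (hmatch p q r hqp hrp hcpq hne).symm
  · -- k ≥ 4
    push_neg at hk3
    obtain ⟨u, huS, v, hvS, huv, hnadj, hstep⟩ :=
      step_lemma T hacyc S (by omega) (fun w hw => by rw [hS]; exact hΔ w hw)
    have hS' : ((S.erase u).erase v).card = k - 2 := by
      rw [Finset.card_erase_of_mem (Finset.mem_erase.mpr ⟨huv.symm, hvS⟩),
        Finset.card_erase_of_mem huS]
      omega
    have hP' : ((P.erase p).erase q).card = k - 2 := by
      rw [Finset.card_erase_of_mem (Finset.mem_erase.mpr ⟨hqp, hqP⟩),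
        Finset.card_erase_of_mem hpP]
      omega
    have hΔ' : ∀ w ∈ (S.erase u).erase v,
        (T.neighborFinset w ∩ ((S.erase u).erase v)).card ≤ (k - 2) - 2 := by
      intro w hw
      rw [Finset.mem_erase, Finset.mem_erase] at hw
      obtain ⟨hwv, hwu, hwS⟩ := hw
      have := hstep w hwS hwu hwv
      rw [hS] at this
      omega
    obtain ⟨g', hinj', hmaps', havoid'⟩ := IH (k - 2) (by omega) _ _ hS' hP' hΔ'
    have hmem' : ∀ x ∈ S, x ≠ u → x ≠ v → x ∈ (S.erase u).erase v :=
      fun x hx h1 h2 => Finset.mem_erase.mpr ⟨h2, Finset.mem_erase.mpr ⟨h1, hx⟩⟩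
    have hg'P : ∀ x ∈ S, x ≠ u → x ≠ v → g' x ∈ (P.erase p).erase q :=
      fun x hx h1 h2 => hmaps' x (hmem' x hx h1 h2)
    have hg'p : ∀ x ∈ S, x ≠ u → x ≠ v → g' x ≠ p := by
      intro x hx h1 h2
      have := hg'P x hx h1 h2
      rw [Finset.mem_erase, Finset.mem_erase] at this
      exact this.2.1
    have hg'q : ∀ x ∈ S, x ≠ u → x ≠ v → g' x ≠ q := by
      intro x hx h1 h2
      have := hg'P x hx h1 h2
      rw [Finset.mem_erase, Finset.mem_erase] at this
      exact this.1
    have hcqp : c s(q, p) ≠ a₀ := by rwa [Sym2.eq_swap]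
    refine ⟨fun x => if x = u then p else if x = v then q else g' x, ?_, ?_, ?_⟩
    · intro x hx y hy hxy
      simp only [Finset.mem_coe] at hx hy
      dsimp only at hxy
      by_cases h1 : x = u <;> by_cases h2 : x = v
      · exact absurd (h1.symm.trans h2) huv
      all_goals by_cases h3 : y = u <;> by_cases h4 : y = v
      · exact absurd (h3.symm.trans h4) huv
      · rw [if_pos h1, if_pos h3] at hxy; rw [h1, h3]
      · rw [if_pos h1, if_neg h3, if_pos h4] at hxy
        exact absurd hxy.symm hqp
      · rw [if_pos h1, if_neg h3, if_neg h4] at hxy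
        exact absurd hxy.symm (hg'p y hy h3 h4)
      · exact absurd (h3.symm.trans h4) huv
      · rw [if_neg h1, if_pos h2, if_pos h3] at hxy
        exact absurd hxy hqp
      · rw [if_neg h1, if_pos h2, if_neg h3, if_pos h4] at hxy; rw [h2, h4]
      · rw [if_neg h1, if_pos h2, if_neg h3, if_neg h4] at hxy
        exact absurd hxy.symm (hg'q y hy h3 h4)
      · exact absurd (h3.symm.trans h4) huv
      · rw [if_neg h1, if_neg h2, if_pos h3] at hxy
        exact absurd hxy (hg'p x hx h1 h2)
      · rw [if_neg h1, if_neg h2, if_neg h3, if_pos h4] at hxy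
        exact absurd hxy (hg'q x hx h1 h2)
      · rw [if_neg h1, if_neg h2, if_neg h3, if_neg h4] at hxy
        exact hinj' (hmem' x hx h1 h2) (hmem' y hy h3 h4) hxy
    · intro x hx
      dsimp only
      by_cases h1 : x = u
      · rw [if_pos h1]; exact hpP
      by_cases h2 : x = v
      · rw [if_neg h1, if_pos h2]; exact hqP
      · rw [if_neg h1, if_neg h2]
        have := hg'P x hx h1 h2
        rw [Finset.mem_erase, Finset.mem_erase] at this
        exact this.2.2
    · intro x hx y hy hxy
      dsimp only
      by_cases h1 : x = u
      · subst h1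
        have h3 : y ≠ x := hxy.ne'
        have h4 : y ≠ v := by rintro rfl; exact hnadj hxy
        rw [if_pos rfl, if_neg h3, if_neg h4]
        by_contra hne
        exact hg'q y hy h3 h4 (hmatch p q (g' y) hqp (hg'p y hy h3 h4) hcpq hne).symm
      by_cases h2 : x = v
      · subst h2
        have h3 : y ≠ u := by rintro rfl; exact hnadj hxy.symm
        have h4 : y ≠ x := hxy.ne'
        rw [if_neg h1, if_pos rfl, if_neg h3, if_neg h4]
        by_contra hne
        exact hg'p y hy h3 h4 (hmatch q p (g' y) hqp.symm (hg'q y hy h3 h4) hcqp hne).symm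
      by_cases h3 : y = u
      · subst h3
        rw [if_neg h1, if_neg h2, if_pos rfl, Sym2.eq_swap]
        by_contra hne
        exact hg'q x hx h1 h2 (hmatch p q (g' x) hqp (hg'p x hx h1 h2) hcpq hne).symm
      by_cases h4 : y = v
      · subst h4
        rw [if_neg h1, if_neg h2, if_neg h3, if_pos rfl, Sym2.eq_swap]
        by_contra hne
        exact hg'p x hx h1 h2 (hmatch q p (g' x) hqp.symm (hg'q x hx h1 h2) hcqp hne).symm
      · rw [if_neg h1, if_neg h2, if_neg h3, if_neg h4]
        exact havoid' x (hmem' x hx h1 h2) y (hmem' y hy h3 h4) hxy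


end helpers

set_option maxHeartbeats 2000000 in
theorem stmt_12 {V : Type} [Fintype V] [DecidableEq V] {n : ℕ}
    (hV : Fintype.card V = n) (hn1 : n % 3 = 1) (hn : 6 ≤ n)
    (T : SimpleGraph V) [DecidableRel T.Adj]
    (hconn : T.Connected) (hacyc : T.IsAcyclic)
    (hstar : ¬ Nonempty (T ≃g completeBipartiteGraph (Fin 1) (Fin (n - 1))))
    (hdeg : ∃ v : V, 3 ∣ T.degree v)
    (c : Sym2 (Fin n) → ZMod 3)
    (hres : ∀ v : Fin n, ∃ a : ZMod 3,
      n - 2 ≤ (univ.filter fun w => w ≠ v ∧ c s(v, w) = a).card) :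
    ∃ f : V ↪ Fin n, ∑ e ∈ T.edgeFinset, c (e.map f) = 0 := by
  classical
  have hn7 : 7 ≤ n := by omega
  -- majority colour of each vertex
  choose maj hmaj_card using hres
  -- budget : at most one exceptional edge per vertex
  have hbud : ∀ v, ((univ.filter fun w => w ≠ v ∧ c s(v, w) ≠ maj v)).card ≤ 1 := by
    intro v
    have h1 : ((univ : Finset (Fin n)).filter (fun w => w ≠ v)).card = n - 1 := by
      rw [Finset.filter_ne', Finset.card_erase_of_mem (Finset.mem_univ v), Finset.card_univ,
        Fintype.card_fin]
    have h2 : (univ.filter fun w : Fin n => w ≠ v ∧ c s(v, w) = maj v)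
        = ((univ : Finset (Fin n)).filter (fun w => w ≠ v)).filter (fun w => c s(v, w) = maj v) := by
      rw [Finset.filter_filter]
    have h3 : (univ.filter fun w : Fin n => w ≠ v ∧ c s(v, w) ≠ maj v)
        = ((univ : Finset (Fin n)).filter (fun w => w ≠ v)).filter (fun w => ¬ (c s(v, w) = maj v)) := by
      rw [Finset.filter_filter]
    have h4 := Finset.card_filter_add_card_filter_not
      (s := (univ : Finset (Fin n)).filter (fun w => w ≠ v)) (p := fun w => c s(v, w) = maj v)
    have h5 := hmaj_card v
    rw [← h2, ← h3] at h4
    omega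
  have huniq : ∀ v w1 w2 : Fin n, w1 ≠ v → w2 ≠ v → c s(v, w1) ≠ maj v → c s(v, w2) ≠ maj v →
      w1 = w2 := by
    intro v w1 w2 h1 h2 h3 h4
    have hb := hbud v
    rw [Finset.card_le_one] at hb
    exact hb w1 (by simp [h1, h3]) w2 (by simp [h2, h4])
  -- degree bound from non-star
  have hdegbound : ∀ w : V, (T.neighborFinset w).card ≤ n - 2 := by
    intro w
    have hsub : T.neighborFinset w ⊆ univ.erase w := by
      intro z hz
      exact Finset.mem_erase.mpr ⟨((T.mem_neighborFinset w z).mp hz).ne', Finset.mem_univ z⟩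
    have hle : (T.neighborFinset w).card ≤ n - 1 := by
      have := Finset.card_le_card hsub
      rwa [Finset.card_erase_of_mem (Finset.mem_univ w), Finset.card_univ, hV] at this
    by_contra hgt
    push_neg at hgt
    have heq : T.neighborFinset w = univ.erase w := by
      apply Finset.eq_of_subset_of_card_le hsub
      rw [Finset.card_erase_of_mem (Finset.mem_univ w), Finset.card_univ, hV]
      omega
    have hall : ∀ y, y ≠ w → T.Adj w y := by
      intro y hy
      have : y ∈ T.neighborFinset w := by
        rw [heq]; exact Finset.mem_erase.mpr ⟨hy, Finset.mem_univ y⟩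
      exact (T.mem_neighborFinset w y).mp this
    exact hstar ⟨starIso T hacyc hV (by omega) hall⟩
  have htreecard : T.edgeFinset.card = n - 1 := by
    have := SimpleGraph.IsTree.card_edgeFinset ⟨hconn, hacyc⟩
    omega
  by_cases hcst : ∀ u v2 : Fin n, maj u = maj v2
  · -- CASE 1 : majority constant
    set a₀ := maj ⟨0, by omega⟩ with ha₀def
    have hmatch : ∀ p q r : Fin n, q ≠ p → r ≠ p → c s(p, q) ≠ a₀ → c s(p, r) ≠ a₀ → q = r := by
      intro p q r h1 h2 h3 h4
      have e : maj p = a₀ := hcst p _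
      rw [← e] at h3 h4
      exact huniq p q r h1 h2 h3 h4
    obtain ⟨g, hinj, hmaps, havoid⟩ := embed_avoid T hacyc (by omega) c a₀ hmatch n univ univ
      (by rw [Finset.card_univ, hV]) (by rw [Finset.card_univ, Fintype.card_fin])
      (by
        intro w _
        rw [Finset.inter_univ]
        have := hdegbound w
        omega)
    have hginj : Function.Injective g := by
      rw [← Set.injOn_univ]
      rwa [Finset.coe_univ] at hinj
    refine ⟨⟨g, hginj⟩, ?_⟩
    have hterm : ∀ e ∈ T.edgeFinset, c (e.map (⟨g, hginj⟩ : V ↪ Fin n)) = a₀ := by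
      intro e he
      induction e using Sym2.ind with
      | _ u v =>
        rw [mem_edgeFinset, mem_edgeSet] at he
        rw [Sym2.map_pair_eq]
        exact havoid u (Finset.mem_univ u) v (Finset.mem_univ v) he
    rw [Finset.sum_congr rfl hterm, Finset.sum_const, htreecard, nsmul_eq_mul]
    have hz : ((n - 1 : ℕ) : ZMod 3) = 0 := (ZMod.natCast_eq_zero_iff _ _).mpr (by omega)
    rw [hz, zero_mul]
  · -- CASE 2 : a unique special vertex
    push_neg at hcst
    obtain ⟨u₀, v₀', hne0⟩ := hcst
    -- there is a colour class of size ≥ 3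
    have hbig : ∃ γ : ZMod 3, 3 ≤ (univ.filter fun v : Fin n => maj v = γ).card := by
      by_contra h
      push_neg at h
      have hsumeq : (univ : Finset (Fin n)).card
          = ∑ γ ∈ (univ : Finset (ZMod 3)), ((univ : Finset (Fin n)).filter fun v => maj v = γ).card :=
        Finset.card_eq_sum_card_fiberwise (fun x _ => Finset.mem_univ _)
      have hle : ∑ γ ∈ (univ : Finset (ZMod 3)), ((univ : Finset (Fin n)).filter fun v => maj v = γ).card
          ≤ (univ : Finset (ZMod 3)).card • 2 := by
        apply Finset.sum_le_card_nsmul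
        intro γ _
        have := h γ
        omega
      rw [Finset.card_univ, Fintype.card_fin] at hsumeq
      rw [Finset.card_univ] at hle
      have h3 : Fintype.card (ZMod 3) = 3 := by decide
      rw [h3, smul_eq_mul] at hle
      omega
    obtain ⟨a₀, ha₀⟩ := hbig
    -- no two distinct vertices outside the big class with the same majority
    have hK1 : ∀ z1 z2 : Fin n, z1 ≠ z2 → maj z1 ≠ a₀ → maj z2 ≠ a₀ → maj z1 = maj z2 → False := by
      intro z1 z2 hzne hz1 hz2 hzeq
      obtain ⟨w1, hw1, w2, hw2, w3, hw3, h12, h13, h23⟩ := Finset.two_lt_card.mp (by omega : 2 < ((univ : Finset (Fin n)).filter fun v => maj v = a₀).card)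
      rw [Finset.mem_filter] at hw1 hw2 hw3
      have hmw : ∀ w : Fin n, w = w1 ∨ w = w2 ∨ w = w3 → maj w = a₀ := by
        rintro w (rfl | rfl | rfl)
        exacts [hw1.2, hw2.2, hw3.2]
      have hmz : ∀ z : Fin n, z = z1 ∨ z = z2 → maj z ≠ a₀ := by
        rintro z (rfl | rfl)
        exacts [hz1, hz2]
      have hzw : ∀ z w : Fin n, (z = z1 ∨ z = z2) → (w = w1 ∨ w = w2 ∨ w = w3) → z ≠ w := by
        intro z w h1 h2 h
        exact hmz z h1 (h ▸ hmw w h2)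
      set D := (({z1, z2} : Finset (Fin n)) ×ˢ ({w1, w2, w3} : Finset (Fin n))) with hD
      set H := ({z1, z2, w1, w2, w3} : Finset (Fin n)) with hH
      have hcD : 6 ≤ D.card := by
        rw [hD, Finset.card_product]
        have hc2 : ({z1, z2} : Finset (Fin n)).card = 2 := by
          rw [Finset.card_insert_of_notMem (by simpa using hzne), Finset.card_singleton]
        have hc3 : ({w1, w2, w3} : Finset (Fin n)).card = 3 := by
          rw [Finset.card_insert_of_notMem (by simp [h12, h13]),
            Finset.card_insert_of_notMem (by simpa using h23), Finset.card_singleton]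
        rw [hc2, hc3]
      have hcH : H.card ≤ 5 := by
        rw [hH]
        have h1 := Finset.card_insert_le z1 ({z2, w1, w2, w3} : Finset (Fin n))
        have h2 := Finset.card_insert_le z2 ({w1, w2, w3} : Finset (Fin n))
        have h3 := Finset.card_insert_le w1 ({w2, w3} : Finset (Fin n))
        have h4 := Finset.card_insert_le w2 ({w3} : Finset (Fin n))
        have h5 : ({w3} : Finset (Fin n)).card = 1 := Finset.card_singleton w3
        omega
      have hmapsD : ∀ pr ∈ D, (if c s(pr.1, pr.2) ≠ maj pr.1 then pr.1 else pr.2) ∈ H := by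
        intro pr hpr
        rw [hD, Finset.mem_product] at hpr
        simp only [Finset.mem_insert, Finset.mem_singleton] at hpr
        rw [hH]
        simp only [Finset.mem_insert, Finset.mem_singleton]
        by_cases hc : c s(pr.1, pr.2) ≠ maj pr.1
        · rw [if_pos hc]; tauto
        · rw [if_neg hc]; tauto
      obtain ⟨pr1, hpr1, pr2, hpr2, hprne, hpreq⟩ :=
        Finset.exists_ne_map_eq_of_card_lt_of_maps_to (by omega) hmapsD
      rw [hD, Finset.mem_product] at hpr1 hpr2
      simp only [Finset.mem_insert, Finset.mem_singleton] at hpr1 hpr2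
      have hne11 : pr1.1 ≠ pr1.2 := hzw _ _ hpr1.1 hpr1.2
      have hne22 : pr2.1 ≠ pr2.2 := hzw _ _ hpr2.1 hpr2.2
      have hne12 : pr1.1 ≠ pr2.2 := hzw _ _ hpr1.1 hpr2.2
      have hne21 : pr2.1 ≠ pr1.2 := hzw _ _ hpr2.1 hpr1.2
      by_cases hc1 : c s(pr1.1, pr1.2) ≠ maj pr1.1 <;>
        by_cases hc2 : c s(pr2.1, pr2.2) ≠ maj pr2.1
      · rw [if_pos hc1, if_pos hc2] at hpreq
        have hc2' : c s(pr1.1, pr2.2) ≠ maj pr1.1 := by rw [hpreq]; exact hc2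
        have h2 : pr1.2 = pr2.2 := huniq pr1.1 pr1.2 pr2.2 hne11.symm hne12.symm hc1 hc2'
        exact hprne (Prod.ext hpreq h2)
      · rw [if_pos hc1, if_neg hc2] at hpreq
        exact hne12 hpreq
      · rw [if_neg hc1, if_pos hc2] at hpreq
        exact hne21 hpreq.symm
      · rw [if_neg hc1, if_neg hc2] at hpreq
        push_neg at hc1 hc2
        have hx1 : c s(pr1.2, pr1.1) ≠ maj pr1.2 := by
          rw [Sym2.eq_swap, hc1, hmw _ hpr1.2]
          exact hmz _ hpr1.1
        have hx2 : c s(pr1.2, pr2.1) ≠ maj pr1.2 := by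
          rw [hpreq, Sym2.eq_swap, hc2, hmw _ hpr2.2]
          exact hmz _ hpr2.1
        have h1 : pr1.1 = pr2.1 := huniq pr1.2 pr1.1 pr2.1 hne11 hne21 hx1 hx2
        exact hprne (Prod.ext h1 hpreq)
    -- the set of special vertices has exactly one element
    have hzmod : ∀ a b c2 d : ZMod 3, d ≠ a → b ≠ a → c2 ≠ a → b ≠ c2 → (d = b ∨ d = c2) := by decide
    have hYone : ∀ y1 y2 : Fin n, maj y1 ≠ a₀ → maj y2 ≠ a₀ → y1 = y2 := by
      intro y1 y2 hy1 hy2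
      by_contra hne
      by_cases hmm : maj y1 = maj y2
      · exact hK1 y1 y2 hne hy1 hy2 hmm
      · -- exactly two specials, counting contradiction
        have hY2 : ∀ y : Fin n, maj y ≠ a₀ → y = y1 ∨ y = y2 := by
          intro y hy
          rcases hzmod a₀ (maj y1) (maj y2) (maj y) hy hy1 hy2 hmm with h | h
          · left
            by_contra hne2
            exact hK1 y y1 hne2 hy hy1 h
          · right
            by_contra hne2
            exact hK1 y y2 hne2 hy hy2 h
        set A := (univ : Finset (Fin n)) \ {y1, y2} with hA
        have hcA : A.card = n - 2 := by
          rw [hA, Finset.card_sdiff_of_subset (Finset.subset_univ _), Finset.card_univ, Fintype.card_fin,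
            Finset.card_insert_of_notMem (by simpa using hne), Finset.card_singleton]
        have hmajA : ∀ p ∈ A, maj p = a₀ := by
          intro p hp
          rw [hA, Finset.mem_sdiff] at hp
          simp only [Finset.mem_insert, Finset.mem_singleton] at hp
          by_contra h
          rcases hY2 p h with rfl | rfl <;> tauto
        have hAy : ∀ p ∈ A, p ≠ y1 ∧ p ≠ y2 := by
          intro p hp
          rw [hA, Finset.mem_sdiff] at hp
          simp only [Finset.mem_insert, Finset.mem_singleton] at hp
          tauto
        have hax : ∀ y : Fin n, maj y ≠ a₀ → n - 3 ≤ (A.filter fun p => c s(y, p) = maj y).card := by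
          intro y hy
          have hle1 : (A.filter fun p => ¬ (c s(y, p) = maj y)).card ≤ 1 := by
            rw [Finset.card_le_one]
            intro p1 hp1 p2 hp2
            rw [Finset.mem_filter] at hp1 hp2
            have f1 : p1 ≠ y := fun h => hy (h ▸ hmajA p1 hp1.1)
            have f2 : p2 ≠ y := fun h => hy (h ▸ hmajA p2 hp2.1)
            exact huniq y p1 p2 f1 f2 hp1.2 hp2.2
          have h4 := Finset.card_filter_add_card_filter_not
            (s := A) (p := fun p => c s(y, p) = maj y)
          omega
        have hd1 := hax y1 hy1
        have hd2 := hax y2 hy2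
        have hdisj : Disjoint (A.filter fun p => c s(y1, p) = maj y1)
            (A.filter fun p => c s(y2, p) = maj y2) := by
          rw [Finset.disjoint_left]
          intro p hp1 hp2
          rw [Finset.mem_filter] at hp1 hp2
          obtain ⟨f1, f2⟩ := hAy p hp1.1
          have g1 : c s(p, y1) ≠ maj p := by
            rw [Sym2.eq_swap, hp1.2, hmajA p hp1.1]
            exact hy1
          have g2 : c s(p, y2) ≠ maj p := by
            rw [Sym2.eq_swap, hp2.2, hmajA p hp1.1]
            exact hy2
          exact hne (huniq p y1 y2 (Ne.symm f1) (Ne.symm f2) g1 g2)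
        have hsubU : (A.filter fun p => c s(y1, p) = maj y1) ∪ (A.filter fun p => c s(y2, p) = maj y2) ⊆ A :=
          Finset.union_subset (Finset.filter_subset _ _) (Finset.filter_subset _ _)
        have hcu := Finset.card_le_card hsubU
        rw [Finset.card_union_of_disjoint hdisj] at hcu
        omega
    -- the unique special vertex x
    have hbigne : ∃ x : Fin n, maj x ≠ a₀ := by
      by_cases h : maj u₀ = a₀
      · exact ⟨v₀', fun hh => hne0 (h.trans hh.symm)⟩
      · exact ⟨u₀, h⟩
    obtain ⟨x, hbx⟩ := hbigne
    have hothers : ∀ u : Fin n, u ≠ x → maj u = a₀ := by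
      intro u hux
      by_contra h
      exact hux (hYone u x h hbx)
    -- the (at most one) exceptional partner w0 of x
    have hw0 : ∃ w0 : Fin n, w0 ≠ x ∧ ∀ u : Fin n, u ≠ x → u ≠ w0 → c s(x, u) = maj x := by
      by_cases hw : ∃ u2 : Fin n, u2 ≠ x ∧ c s(x, u2) ≠ maj x
      · obtain ⟨w0, hw1, hw2⟩ := hw
        refine ⟨w0, hw1, ?_⟩
        intro u h1 h2
        by_contra h3
        exact h2 (huniq x u w0 h1 hw1 h3 hw2)
      · push_neg at hw
        obtain ⟨w0, hw0x⟩ := Fintype.exists_ne_of_one_lt_card (by rw [Fintype.card_fin]; omega) x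
        exact ⟨w0, hw0x, fun u h1 _ => hw u h1⟩
    obtain ⟨w0, hw0x, hW⟩ := hw0
    -- all edges avoiding x have colour a₀
    have hin : ∀ p q : Fin n, p ≠ q → p ≠ x → q ≠ x → c s(p, q) = a₀ := by
      have haux : ∀ p q : Fin n, p ≠ q → p ≠ x → q ≠ x → p ≠ w0 → c s(p, q) = a₀ := by
        intro p q h1 h2 h3 h4
        have hcxp : c s(x, p) = maj x := hW p h2 h4
        have hexc : c s(p, x) ≠ maj p := by
          rw [Sym2.eq_swap, hcxp, hothers p h2]
          exact hbx
        by_contra h5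
        have h5' : c s(p, q) ≠ maj p := by
          rw [hothers p h2]
          exact h5
        exact h3 (huniq p q x (Ne.symm h1) (Ne.symm h2) h5' hexc)
      intro p q h1 h2 h3
      by_cases h4 : p = w0
      · have hq : q ≠ w0 := fun h => h1 (h4.trans h.symm)
        rw [Sym2.eq_swap]
        exact haux q p (Ne.symm h1) h3 h2 hq
      · exact haux p q h1 h2 h3 h4
    -- the tree vertex of degree divisible by 3
    obtain ⟨v0, hv0deg⟩ := hdeg
    have hd1 : 0 < T.degree v0 := by
      rw [SimpleGraph.degree_pos_iff_exists_adj]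
      have h2 : (1 : ℕ) < Fintype.card V := by omega
      obtain ⟨w', hw'⟩ := Fintype.exists_ne_of_one_lt_card h2 v0
      obtain ⟨pw⟩ := hconn.preconnected v0 w'
      cases pw with
      | nil => exact absurd rfl hw'
      | cons h _ => exact ⟨_, h⟩
    have hd3 : 3 ≤ T.degree v0 := by
      obtain ⟨k, hk⟩ := hv0deg
      have : T.degree v0 ≠ 0 := by omega
      omega
    have hdle : T.degree v0 ≤ n - 2 := hdegbound v0
    -- a non-neighbour ℓ of v0
    have hsubnb : T.neighborFinset v0 ⊆ univ.erase v0 := by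
      intro z hz
      exact Finset.mem_erase.mpr ⟨((T.mem_neighborFinset v0 z).mp hz).ne', Finset.mem_univ z⟩
    have hcardnn : ((univ.erase v0) \ T.neighborFinset v0).Nonempty := by
      rw [← Finset.card_pos, Finset.card_sdiff_of_subset hsubnb, Finset.card_erase_of_mem (Finset.mem_univ v0),
        Finset.card_univ, hV]
      have : (T.neighborFinset v0).card = T.degree v0 := rfl
      omega
    obtain ⟨ℓ, hℓ⟩ := hcardnn
    rw [Finset.mem_sdiff, Finset.mem_erase] at hℓ
    obtain ⟨⟨hℓv0, _⟩, hℓnbr⟩ := hℓ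
    have hℓnadj : ¬ T.Adj v0 ℓ := fun h => hℓnbr ((T.mem_neighborFinset v0 ℓ).mpr h)
    -- build the bijection
    have e0 : V ≃ Fin n := Fintype.equivFinOfCardEq hV
    set g1 : V ≃ Fin n := e0.trans (Equiv.swap (e0 v0) x) with hg1
    have hg1v0 : g1 v0 = x := by
      rw [hg1]
      simp [Equiv.swap_apply_left]
    set g2 : V ≃ Fin n := g1.trans (Equiv.swap (g1 ℓ) w0) with hg2
    have hg2ℓ : g2 ℓ = w0 := by
      rw [hg2]
      simp [Equiv.swap_apply_left]
    have hg1ℓx : g1 ℓ ≠ x := by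
      rw [← hg1v0]
      exact fun h => hℓv0 (g1.injective h)
    have hg2v0 : g2 v0 = x := by
      rw [hg2]
      simp only [Equiv.trans_apply, hg1v0]
      exact Equiv.swap_apply_of_ne_of_ne (Ne.symm hg1ℓx) (Ne.symm hw0x)
    refine ⟨g2.toEmbedding, ?_⟩
    -- split the sum
    rw [← Finset.sum_filter_add_sum_filter_not T.edgeFinset (fun e => v0 ∈ e)]
    have hterm1 : ∀ e ∈ T.edgeFinset.filter (fun e => v0 ∈ e),
        c (e.map g2.toEmbedding) = maj x := by
      intro e he
      induction e using Sym2.ind with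
      | _ u v =>
        rw [Finset.mem_filter, mem_edgeFinset, mem_edgeSet] at he
        obtain ⟨hadj, hmem⟩ := he
        rw [Sym2.mem_iff] at hmem
        rw [Sym2.map_pair_eq]
        have key : ∀ y : V, T.Adj v0 y → c s(g2 v0, g2 y) = maj x := by
          intro y hy
          rw [hg2v0]
          have h1 : g2 y ≠ x := by
            rw [← hg2v0]
            exact fun h => hy.ne' (g2.injective h)
          have h2 : g2 y ≠ w0 := by
            rw [← hg2ℓ]
            intro h
            exact hℓnadj ((g2.injective h) ▸ hy)
          exact hW (g2 y) h1 h2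
        rcases hmem with rfl | rfl
        · exact key v hadj
        · rw [Sym2.eq_swap]
          exact key u hadj.symm
    have hterm2 : ∀ e ∈ T.edgeFinset.filter (fun e => ¬ v0 ∈ e),
        c (e.map g2.toEmbedding) = a₀ := by
      intro e he
      induction e using Sym2.ind with
      | _ u v =>
        rw [Finset.mem_filter, mem_edgeFinset, mem_edgeSet] at he
        obtain ⟨hadj, hmem⟩ := he
        rw [Sym2.mem_iff] at hmem
        push_neg at hmem
        rw [Sym2.map_pair_eq]
        have h1 : g2 u ≠ g2 v := fun h => hadj.ne (g2.injective h)
        have h2 : g2 u ≠ x := by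
          rw [← hg2v0]
          exact fun h => hmem.1 (g2.injective h).symm
        have h3 : g2 v ≠ x := by
          rw [← hg2v0]
          exact fun h => hmem.2 (g2.injective h).symm
        exact hin (g2 u) (g2 v) h1 h2 h3
    rw [Finset.sum_congr rfl hterm1, Finset.sum_congr rfl hterm2, Finset.sum_const,
      Finset.sum_const]
    have hc1 : (T.edgeFinset.filter (fun e => v0 ∈ e)).card = T.degree v0 := by
      rw [← SimpleGraph.incidenceFinset_eq_filter, SimpleGraph.card_incidenceFinset_eq_degree]
    have hctot := Finset.card_filter_add_card_filter_not
      (s := T.edgeFinset) (p := fun e => v0 ∈ e)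
    have hc2 : (T.edgeFinset.filter (fun e => ¬ v0 ∈ e)).card = (n - 1) - T.degree v0 := by
      omega
    rw [hc1, hc2, nsmul_eq_mul, nsmul_eq_mul]
    have hz1 : ((T.degree v0 : ℕ) : ZMod 3) = 0 :=
      (ZMod.natCast_eq_zero_iff _ _).mpr hv0deg
    have hz2 : (((n - 1) - T.degree v0 : ℕ) : ZMod 3) = 0 := by
      apply (ZMod.natCast_eq_zero_iff _ _).mpr
      obtain ⟨k, hk⟩ := hv0deg
      omega
    rw [hz1, hz2, zero_mul, zero_mul, add_zero]
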